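/- Let q = p^e with p prime, 0 ≤ k < e, and let R = F_q^N be the product ring with componentwise operations. Let C ⊆ R^n be an R-submodule, and for each S ∈ {1,…,N} let C_S = π_S(C) where π_S : R^n → F_q^n takes the S-th component in every coordinate. Then C is k-Galois LCD over R (i.e. C ∩ C^{⊥k,R} = {0}) if and only if for every S, the linear code C_S ⊆ F_q^n is k-Galois LCD (i.e. C_S ∩ (C_S)^{⊥k} = {0}). -/
import Mathlib


/-- The `k`-Galois dual (as a set) of a set of codewords `C ⊆ R^ι`,
with respect to the inner product `⟨u,v⟩ = ∑ i, u i * (v i)^pk`. -/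
def galoisDualSet {R : Type*} [CommRing R] {ι : Type*} [Fintype ι]
    (pk : ℕ) (C : Set (ι → R)) : Set (ι → R) :=
  {v | ∀ c ∈ C, ∑ i, c i * v i ^ pk = 0}

theorem stmt11 {p e k N n : ℕ} (hp : p.Prime) (he : 0 < e) (hk : k < e)
    {F : Type*} [Field F] [Fintype F] (hcard : Fintype.card F = p ^ e)
    (C : Submodule (Fin N → F) (Fin n → Fin N → F)) :
    (C : Set (Fin n → Fin N → F)) ∩
          galoisDualSet (p ^ k) (C : Set (Fin n → Fin N → F)) =
        {0} ↔
      ∀ S : Fin N,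
        ((fun ρ : Fin n → Fin N → F => fun i => ρ i S) ''
              (C : Set (Fin n → Fin N → F))) ∩
            galoisDualSet (p ^ k)
              ((fun ρ : Fin n → Fin N → F => fun i => ρ i S) ''
                (C : Set (Fin n → Fin N → F))) =
          {0} := by
  have hpk : p ^ k ≠ 0 := pow_ne_zero k hp.pos.ne'
  -- componentwise description of the dual over R
  have hdual : ∀ v : Fin n → Fin N → F,
      v ∈ galoisDualSet (p ^ k) (C : Set (Fin n → Fin N → F)) ↔
      ∀ S : Fin N, (fun i => v i S) ∈ galoisDualSet (p ^ k)
        ((fun ρ : Fin n → Fin N → F => fun i => ρ i S) ''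
          (C : Set (Fin n → Fin N → F))) := by
    intro v
    constructor
    · rintro hv S _ ⟨c, hc, rfl⟩
      have h1 := congrFun (hv c hc) S
      simpa using h1
    · intro hv c hc
      funext S
      have h1 := hv S (fun i => c i S) ⟨c, hc, rfl⟩
      simpa using h1
  constructor
  · intro h S
    ext x
    simp only [Set.mem_inter_iff, Set.mem_singleton_iff]
    constructor
    · rintro ⟨⟨c, hc, rfl⟩, hx⟩
      set ρ : Fin n → Fin N → F := (Pi.single S (1 : F) : Fin N → F) • c with hρdef
      have hρeval : ∀ (i : Fin n) (T : Fin N),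
          ρ i T = if T = S then c i S else 0 := by
        intro i T
        show (Pi.single S (1 : F) : Fin N → F) T * c i T = _
        rcases eq_or_ne T S with rfl | hTS
        · simp
        · simp [Pi.single_apply, hTS]
      have hρC : ρ ∈ C := C.smul_mem _ hc
      have hρd : ρ ∈ galoisDualSet (p ^ k) (C : Set (Fin n → Fin N → F)) := by
        rw [hdual]
        intro T c' hc'
        rcases eq_or_ne T S with rfl | hTS
        · have : (fun i => ρ i T) = fun i => c i T := by
            funext i; simp [hρeval]
          rw [this]
          exact hx c' hc'
        · have : (fun i => ρ i T) = fun _ => (0 : F) := by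
            funext i; simp [hρeval, hTS]
          rw [this]
          simp [zero_pow hpk]
      have hρ0 : ρ = 0 := by
        have : ρ ∈ (C : Set (Fin n → Fin N → F)) ∩
            galoisDualSet (p ^ k) (C : Set (Fin n → Fin N → F)) := ⟨hρC, hρd⟩
        rw [h] at this
        exact this
      funext i
      have := congrFun (congrFun hρ0 i) S
      rw [hρeval i S] at this
      simpa using this
    · rintro rfl
      refine ⟨⟨0, C.zero_mem, by funext i; simp⟩, ?_⟩
      intro c' _
      simp [zero_pow hpk]
  · intro h
    ext ρ
    simp only [Set.mem_inter_iff, Set.mem_singleton_iff]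
    constructor
    · rintro ⟨hρC, hρd⟩
      funext i S
      have hmem : (fun i => ρ i S) ∈
          ((fun ρ : Fin n → Fin N → F => fun i => ρ i S) ''
              (C : Set (Fin n → Fin N → F))) ∩
            galoisDualSet (p ^ k)
              ((fun ρ : Fin n → Fin N → F => fun i => ρ i S) ''
                (C : Set (Fin n → Fin N → F))) :=
        ⟨⟨ρ, hρC, rfl⟩, (hdual ρ).1 hρd S⟩
      rw [h S] at hmem
      exact congrFun hmem i
    · rintro rfl
      refine ⟨C.zero_mem, ?_⟩
      intro c' _
      have : ∀ i : Fin n, ((0 : Fin n → Fin N → F) i) ^ (p ^ k) = 0 := by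
        intro i; exact zero_pow hpk
      simp [zero_pow hpk]
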